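/- Let x ∈ X and w = P(1). In kX_∞ of weight λ, Δ(w⋄x⋄w) = Δ(P(1)xP(1)) = (P(1)xP(1))⊗1 + 2P²(1)⊗x + λP(1)⊗x + (xP(1))⊗P(1) + P(1)⊗(P(1)x) + (P(1)x)⊗P(1) + P(1)⊗(xP(1)) + 2x⊗P²(1) + λx⊗P(1) + 1⊗(P(1)xP(1)). In particular, if λ ≠ 0 in k, the terms λP(1)⊗x and λx⊗P(1) have total degree 2 ≠ 3 = deg(P(1)xP(1)), so Δ does not respect the total degree grading. -/

import Mathlib

open TensorProduct

universe u v

/-- Letters of Rota-Baxter bracketed words: either a variable from `X` or a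
bracketed word `⌊w⌋` (a list of letters). -/
inductive RBL (X : Type u) : Type u
  | var : X → RBL X
  | br : List (RBL X) → RBL X

namespace RBL

variable {X : Type u}

/-- `a.isBr = true` iff the letter `a` is a bracketed element `⌊w⌋ ∈ ⌊X_∞⌋`. -/
def isBr : RBL X → Bool
  | var _ => false
  | br _ => true

mutual
  /-- Validity of a letter: the inside of a bracket must be a Rota-Baxter bracketed word. -/
  def valid : RBL X → Prop
    | var _ => True
    | br l => wordValid l
  /-- `wordValid l` says that the list of letters `l` is a Rota-Baxter bracketed word,
  i.e. all letters are valid and the letters alternate (no two consecutive brackets). -/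
  def wordValid : List (RBL X) → Prop
    | [] => True
    | [a] => valid a
    | a :: b :: l => valid a ∧ ¬(a.isBr = true ∧ b.isBr = true) ∧ wordValid (b :: l)
end

lemma wordValid_nil : wordValid ([] : List (RBL X)) := by simp [wordValid]

lemma wordValid_var (x : X) : wordValid [var x] := by simp [wordValid, valid]

lemma wordValid_br {l : List (RBL X)} (h : wordValid l) : wordValid [br l] := by
  simpa [wordValid, valid] using h

mutual
  /-- The total degree of a letter. -/
  def degL : RBL X → ℕ
    | var _ => 1
    | br l => degW l + 1
  /-- The total degree of a word: the number of occurrences of brackets (i.e. of `P`)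
  plus the number of occurrences of letters of `X`. -/
  def degW : List (RBL X) → ℕ
    | [] => 0
    | a :: l => degL a + degW l
end

end RBL

/-- The set `X_∞` of Rota-Baxter bracketed words on `X`. -/
def RBWord (X : Type u) : Type u := {l : List (RBL X) // RBL.wordValid l}

namespace RBWord

variable {X : Type u}

/-- The empty word `1`. -/
def one : RBWord X := ⟨[], RBL.wordValid_nil⟩

/-- The total degree of a Rota-Baxter bracketed word. -/
def deg (w : RBWord X) : ℕ := RBL.degW w.1

end RBWord

variable (k : Type v) [CommRing k] (X : Type u)

/-- The free `k`-module `kX_∞` on the Rota-Baxter bracketed words. -/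
abbrev RBMod : Type max u v := RBWord X →₀ k

variable {X}

/-- A Rota-Baxter bracketed word viewed as a basis element of `kX_∞`. -/
noncomputable def sing (w : RBWord X) : RBMod k X := Finsupp.single w 1

variable (X)

/-- The Rota-Baxter operator `P` on `kX_∞`, sending a basis word `w` to `⌊w⌋`. -/
noncomputable def Pop : RBMod k X →ₗ[k] RBMod k X :=
  Finsupp.lmapDomain k k fun w => (⟨[RBL.br w.1], RBL.wordValid_br w.2⟩ : RBWord X)

/-- Concatenation on the left by `u₀` and on the right by `v₀`, as a linear map on `kX_∞`
(sending basis words whose concatenation is not valid to `0`; in all uses below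
the concatenations are valid). -/
noncomputable def concatLR (u₀ v₀ : List (RBL X)) : RBMod k X →ₗ[k] RBMod k X :=
  Finsupp.lsum k fun w =>
    letI := Classical.dec (RBL.wordValid (u₀ ++ w.1 ++ v₀))
    if h : RBL.wordValid (u₀ ++ w.1 ++ v₀) then
      Finsupp.lsingle (⟨u₀ ++ w.1 ++ v₀, h⟩ : RBWord X) else 0

/-- The counit `ε : kX_∞ → k`, `ε(1) = 1` and `ε(w) = 0` for basis words `w ≠ 1`. -/
noncomputable def eps : RBMod k X →ₗ[k] k := Finsupp.lapply RBWord.one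

/-- The homogeneous component `H^(n)` of `kX_∞`: the span of the basis words of total
degree `n`. -/
noncomputable def Hdeg (n : ℕ) : Submodule k (RBMod k X) :=
  Finsupp.supported k k {w : RBWord X | w.deg = n}

variable (lam : k)

/-- The data of the product `⋄` on the free Rota-Baxter algebra `kX_∞` of weight `lam`,
together with its recursive defining equations:
* if the concatenation of `u` and `v` is again a Rota-Baxter bracketed word (in particular
  if `u` or `v` is empty, or if the last letter of `u` or the first letter of `v` is a
  variable), then `u ⋄ v` is the concatenation `uv`;
* if `u = u₀⌊ā⌋` and `v = ⌊b̄⌋v₀`, then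
  `u ⋄ v = u₀(⌊⌊ā⌋ ⋄ b̄⌋ + ⌊ā ⋄ ⌊b̄⌋⌋ + λ⌊ā ⋄ b̄⌋)v₀`. -/
structure FreeRBAData where
  /-- the product `⋄`, as a `k`-bilinear map -/
  d : RBMod k X →ₗ[k] RBMod k X →ₗ[k] RBMod k X
  d_concat : ∀ (u v : RBWord X) (h : RBL.wordValid (u.1 ++ v.1)),
    d (sing k u) (sing k v) = sing k ⟨u.1 ++ v.1, h⟩
  d_br : ∀ (u₀ v₀ : List (RBL X)) (a b : RBWord X)
    (hu : RBL.wordValid (u₀ ++ [RBL.br a.1])) (hv : RBL.wordValid (RBL.br b.1 :: v₀)),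
    d (sing k ⟨u₀ ++ [RBL.br a.1], hu⟩) (sing k ⟨RBL.br b.1 :: v₀, hv⟩)
      = concatLR k X u₀ v₀
          (Pop k X (d (Pop k X (sing k a)) (sing k b))
            + Pop k X (d (sing k a) (Pop k X (sing k b)))
            + lam • Pop k X (d (sing k a) (sing k b)))

namespace FreeRBAData

variable {k X lam}

/-- The componentwise product `⋄ ⊗ ⋄` on `kX_∞ ⊗ kX_∞`. -/
noncomputable def mulT (D : FreeRBAData k X lam) :
    (RBMod k X ⊗[k] RBMod k X) →ₗ[k] (RBMod k X ⊗[k] RBMod k X) →ₗ[k]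
      (RBMod k X ⊗[k] RBMod k X) :=
  TensorProduct.map₂ D.d D.d

end FreeRBAData

/-- The free Rota-Baxter algebra `kX_∞` of weight `lam` together with the coproduct `Δ`,
characterized by its recursive defining equations:
`Δ(1) = 1 ⊗ 1`, `Δ(x) = x ⊗ 1 + 1 ⊗ x` for `x ∈ X`,
`Δ(⌊w⌋) = ⌊w⌋ ⊗ 1 + (id ⊗ P)Δ(w)`, and
`Δ(w₁ ⋄ ⋯ ⋄ w_m) = Δ(w₁) ⋄ ⋯ ⋄ Δ(w_m)` for the `⋄`-factorization of a word into its
(alternating) sequence of letters. -/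
structure FreeRBBialgData extends FreeRBAData k X lam where
  /-- the coproduct `Δ` -/
  Dl : RBMod k X →ₗ[k] (RBMod k X ⊗[k] RBMod k X)
  Dl_one : Dl (sing k RBWord.one) = sing k RBWord.one ⊗ₜ[k] sing k RBWord.one
  Dl_var : ∀ (x : X),
    Dl (sing k ⟨[RBL.var x], RBL.wordValid_var x⟩)
      = sing k ⟨[RBL.var x], RBL.wordValid_var x⟩ ⊗ₜ[k] sing k RBWord.one
        + sing k RBWord.one ⊗ₜ[k] sing k ⟨[RBL.var x], RBL.wordValid_var x⟩
  Dl_br : ∀ w : RBWord X,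
    Dl (Pop k X (sing k w))
      = Pop k X (sing k w) ⊗ₜ[k] sing k RBWord.one
        + TensorProduct.map LinearMap.id (Pop k X) (Dl (sing k w))
  Dl_cons : ∀ (a : RBL X) (l : List (RBL X)) (h : RBL.wordValid (a :: l))
    (ha : RBL.wordValid [a]) (hl : RBL.wordValid l), l ≠ [] →
    Dl (sing k ⟨a :: l, h⟩)
      = TensorProduct.map₂ d d (Dl (sing k ⟨[a], ha⟩)) (Dl (sing k ⟨l, hl⟩))

namespace RBL

variable {X : Type u}

lemma wordValid_map_var (s : List X) : wordValid (s.map RBL.var) := by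
  induction s with
  | nil => exact wordValid_nil
  | cons a t ih =>
    cases t with
    | nil => exact wordValid_var a
    | cons b t' =>
      simp only [List.map_cons] at ih ⊢
      exact ⟨by simp [valid], by simp [isBr], ih⟩

end RBL

variable {X}

/-- The word `x₁ ⋯ x_m ∈ M(X)` as a basis element of `kX_∞`. -/
noncomputable def varWord (s : List X) : RBMod k X :=
  sing k ⟨s.map RBL.var, RBL.wordValid_map_var s⟩

/-- A letter in `X ∪ ⌊X_∞⌋`, viewed as a basis element of `kX_∞` (invalid letters are
sent to `0`; they do not occur below). -/
noncomputable def letterMod (a : RBL X) : RBMod k X :=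
  letI := Classical.dec (RBL.wordValid [a])
  if h : RBL.wordValid [a] then sing k ⟨[a], h⟩ else 0

variable (X)

/-- The tensor product `H^(p) ⊗ H^(q)` of homogeneous components, as a submodule of
`kX_∞ ⊗ kX_∞`. -/
noncomputable def HdegT (p q : ℕ) : Submodule k (RBMod k X ⊗[k] RBMod k X) :=
  Submodule.map₂ (TensorProduct.mk k (RBMod k X) (RBMod k X)) (Hdeg k X p) (Hdeg k X q)

namespace FreeRBAData

variable {k X lam}

/-- The `⋄`-product `w₁ ⋄ (w₂ ⋄ (⋯ ⋄ (w_m ⋄ 1)))` of a sequence of letters. -/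
noncomputable def prodList (D : FreeRBAData k X lam) (l : List (RBL X)) : RBMod k X :=
  l.foldr (fun a acc => D.d (letterMod k a) acc) (sing k RBWord.one)

end FreeRBAData
section Aux

variable {k : Type v} [CommRing k] {X : Type u} {lam : k}

namespace RBaux

/-- `⌊1⌋` -/
def Wb : RBWord X := ⟨[RBL.br []], by simp [RBL.wordValid, RBL.valid]⟩
/-- `⌊⌊1⌋⌋` -/
def Wbb : RBWord X := ⟨[RBL.br [RBL.br []]],
  by simp [RBL.wordValid, RBL.valid]⟩
/-- `x` -/
def Wx (x : X) : RBWord X := ⟨[RBL.var x], RBL.wordValid_var x⟩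
/-- `⌊1⌋x` -/
def Wbx (x : X) : RBWord X := ⟨[RBL.br [], RBL.var x],
  by simp [RBL.wordValid, RBL.valid, RBL.isBr]⟩
/-- `x⌊1⌋` -/
def Wxb (x : X) : RBWord X := ⟨[RBL.var x, RBL.br []],
  by simp [RBL.wordValid, RBL.valid, RBL.isBr]⟩
/-- `⌊1⌋x⌊1⌋` -/
def Wbxb (x : X) : RBWord X := ⟨[RBL.br [], RBL.var x, RBL.br []],
  by simp [RBL.wordValid, RBL.valid, RBL.isBr]⟩

lemma Pop_sing (w : RBWord X) :
    Pop k X (sing k w) = sing k ⟨[RBL.br w.1], RBL.wordValid_br w.2⟩ := by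
  simp [Pop, sing, Finsupp.lmapDomain_apply, Finsupp.mapDomain_single]
  exact Finsupp.mapDomain_single

lemma Pop_one : Pop k X (sing k RBWord.one) = sing k (Wb (X := X)) := Pop_sing _

lemma Pop_b : Pop k X (sing k (Wb (X := X))) = sing k (Wbb (X := X)) := Pop_sing _

lemma sing_apply (w w' : RBWord X) [Decidable (w = w')] :
    sing k w w' = if w = w' then (1 : k) else 0 := by
  rw [sing, Finsupp.single_apply]

lemma concatLR_sing (u₀ v₀ : List (RBL X)) (w : RBWord X)
    (h : RBL.wordValid (u₀ ++ w.1 ++ v₀)) :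
    concatLR k X u₀ v₀ (sing k w) = sing k ⟨u₀ ++ w.1 ++ v₀, h⟩ := by
  simp only [concatLR, sing, Finsupp.lsum_single, dif_pos h, Finsupp.lsingle_apply]
  rfl

variable (A : FreeRBAData k X lam)

lemma d_one_left (w : RBWord X) :
    A.d (sing k RBWord.one) (sing k w) = sing k w :=
  A.d_concat RBWord.one w w.2

lemma d_one_right (w : RBWord X) :
    A.d (sing k w) (sing k RBWord.one) = sing k w := by
  have h : RBL.wordValid (w.1 ++ (RBWord.one (X := X)).1) := by
    simpa [RBWord.one] using w.2
  have e : (⟨w.1 ++ (RBWord.one (X := X)).1, h⟩ : RBWord X) = w :=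
    Subtype.ext (by simp [RBWord.one])
  rw [A.d_concat w RBWord.one h, e]

lemma d_b_x (x : X) : A.d (sing k (Wb (X := X))) (sing k (Wx x)) = sing k (Wbx x) :=
  A.d_concat Wb (Wx x) (Wbx x).2

lemma d_x_b (x : X) : A.d (sing k (Wx x)) (sing k (Wb (X := X))) = sing k (Wxb x) :=
  A.d_concat (Wx x) Wb (Wxb x).2

lemma d_bx_b (x : X) : A.d (sing k (Wbx x)) (sing k (Wb (X := X))) = sing k (Wbxb x) :=
  A.d_concat (Wbx x) Wb (Wbxb x).2

lemma d_b_xb (x : X) : A.d (sing k (Wb (X := X))) (sing k (Wxb x)) = sing k (Wbxb x) :=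
  A.d_concat Wb (Wxb x) (Wbxb x).2

lemma d_b_b :
    A.d (sing k (Wb (X := X))) (sing k (Wb (X := X)))
      = sing k (Wbb (X := X)) + sing k (Wbb (X := X)) + lam • sing k (Wb (X := X)) := by
  have hu : RBL.wordValid (([] : List (RBL X)) ++ [RBL.br RBWord.one.1]) := Wb.2
  have hv : RBL.wordValid (RBL.br (RBWord.one (X := X)).1 :: []) := Wb.2
  have h := A.d_br [] [] RBWord.one RBWord.one hu hv
  have e1 : (sing k (⟨[] ++ [RBL.br RBWord.one.1], hu⟩ : RBWord X)) = sing k Wb := rfl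
  rw [e1] at h
  rw [show (sing k (⟨RBL.br (RBWord.one (X := X)).1 :: [], hv⟩ : RBWord X))
        = sing k (Wb (X := X)) from rfl] at h
  rw [h, Pop_one, d_one_right, d_one_left, d_one_left, Pop_b, Pop_one]
  rw [map_add, map_add, map_smul, concatLR_sing _ _ _ (by simpa using (Wbb (X := X)).2),
    concatLR_sing _ _ _ (by simpa using (Wb (X := X)).2)]
  congr 2

variable (D : FreeRBBialgData k X lam)

lemma Dl_x (x : X) :
    D.Dl (sing k (Wx x))
      = sing k (Wx x) ⊗ₜ[k] sing k RBWord.one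
        + sing k RBWord.one ⊗ₜ[k] sing k (Wx x) := D.Dl_var x

lemma Dl_b :
    D.Dl (sing k (Wb (X := X)))
      = sing k (Wb (X := X)) ⊗ₜ[k] sing k RBWord.one
        + sing k RBWord.one ⊗ₜ[k] sing k (Wb (X := X)) := by
  have h := D.Dl_br RBWord.one
  rw [Pop_one] at h
  rw [h, D.Dl_one, TensorProduct.map_tmul, LinearMap.id_apply, Pop_one]

lemma Dl_xb (x : X) :
    D.Dl (sing k (Wxb x))
      = sing k (Wxb x) ⊗ₜ[k] sing k RBWord.one
        + sing k (Wx x) ⊗ₜ[k] sing k (Wb (X := X))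
        + sing k (Wb (X := X)) ⊗ₜ[k] sing k (Wx x)
        + sing k RBWord.one ⊗ₜ[k] sing k (Wxb x) := by
  have h := D.Dl_cons (RBL.var x) [RBL.br []] (Wxb x).2 (Wx x).2 (Wb (X := X)).2
    (by simp)
  rw [show (sing k (⟨RBL.var x :: [RBL.br []], (Wxb x).2⟩ : RBWord X))
        = sing k (Wxb x) from rfl] at h
  rw [show (⟨[RBL.var x], (Wx x).2⟩ : RBWord X) = Wx x from rfl,
    show (⟨[RBL.br []], (Wb (X := X)).2⟩ : RBWord X) = Wb from rfl] at h
  rw [h, Dl_x, Dl_b]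
  simp only [map_add, LinearMap.add_apply, TensorProduct.map₂_apply_tmul,
    TensorProduct.map_tmul, d_one_left, d_one_right, d_x_b]
  module

lemma Dl_bxb (x : X) :
    D.Dl (sing k (Wbxb x))
      = sing k (Wbxb x) ⊗ₜ[k] sing k RBWord.one
        + sing k (Wbx x) ⊗ₜ[k] sing k (Wb (X := X))
        + (sing k (Wbb (X := X)) + sing k (Wbb (X := X))
            + lam • sing k (Wb (X := X))) ⊗ₜ[k] sing k (Wx x)
        + sing k (Wb (X := X)) ⊗ₜ[k] sing k (Wxb x)
        + sing k (Wxb x) ⊗ₜ[k] sing k (Wb (X := X))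
        + sing k (Wx x) ⊗ₜ[k] (sing k (Wbb (X := X)) + sing k (Wbb (X := X))
            + lam • sing k (Wb (X := X)))
        + sing k (Wb (X := X)) ⊗ₜ[k] sing k (Wbx x)
        + sing k RBWord.one ⊗ₜ[k] sing k (Wbxb x) := by
  have h := D.Dl_cons (RBL.br []) [RBL.var x, RBL.br []] (Wbxb x).2 (Wb (X := X)).2
    (Wxb x).2 (by simp)
  rw [show (sing k (⟨RBL.br [] :: [RBL.var x, RBL.br []], (Wbxb x).2⟩ : RBWord X))
        = sing k (Wbxb x) from rfl] at h
  rw [show (⟨[RBL.br []], (Wb (X := X)).2⟩ : RBWord X) = Wb from rfl,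
    show (⟨[RBL.var x, RBL.br []], (Wxb x).2⟩ : RBWord X) = Wxb x from rfl] at h
  rw [h, Dl_b, Dl_xb]
  simp only [map_add, LinearMap.add_apply, TensorProduct.map₂_apply_tmul,
    TensorProduct.map_tmul, d_one_left, d_one_right, d_b_x, d_b_xb, d_b_b,
    TensorProduct.add_tmul, TensorProduct.tmul_add, TensorProduct.smul_tmul',
    TensorProduct.tmul_smul]
  module

end RBaux

end Aux
/-- For `x ∈ X` and `w = P(1)`, the coproduct of `w ⋄ x ⋄ w = P(1)xP(1)`
in `kX_∞` of weight `lam` is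
`Δ(P(1)xP(1)) = (P(1)xP(1))⊗1 + 2P²(1)⊗x + lam·P(1)⊗x + (xP(1))⊗P(1) + P(1)⊗(P(1)x)
+ (P(1)x)⊗P(1) + P(1)⊗(xP(1)) + 2x⊗P²(1) + lam·x⊗P(1) + 1⊗(P(1)xP(1))`.
In particular, if `lam ≠ 0`, the terms `lam·P(1)⊗x` and `lam·x⊗P(1)` have total degree
`2 ≠ 3 = deg(P(1)xP(1))`, so `Δ` does not respect the total degree grading. -/
theorem coproduct_P1xP1
    {k : Type v} [CommRing k] {X : Type u} {lam : k} (D : FreeRBBialgData k X lam)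
    (x : X) :
    (D.Dl (D.d (D.d (Pop k X (sing k RBWord.one)) (varWord k [x]))
        (Pop k X (sing k RBWord.one)))
      = (D.d (D.d (Pop k X (sing k RBWord.one)) (varWord k [x]))
            (Pop k X (sing k RBWord.one))) ⊗ₜ[k] sing k RBWord.one
        + 2 • (Pop k X (Pop k X (sing k RBWord.one)) ⊗ₜ[k] varWord k [x])
        + lam • (Pop k X (sing k RBWord.one) ⊗ₜ[k] varWord k [x])
        + (D.d (varWord k [x]) (Pop k X (sing k RBWord.one)))
            ⊗ₜ[k] Pop k X (sing k RBWord.one)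
        + Pop k X (sing k RBWord.one)
            ⊗ₜ[k] (D.d (Pop k X (sing k RBWord.one)) (varWord k [x]))
        + (D.d (Pop k X (sing k RBWord.one)) (varWord k [x]))
            ⊗ₜ[k] Pop k X (sing k RBWord.one)
        + Pop k X (sing k RBWord.one)
            ⊗ₜ[k] (D.d (varWord k [x]) (Pop k X (sing k RBWord.one)))
        + 2 • (varWord k [x] ⊗ₜ[k] Pop k X (Pop k X (sing k RBWord.one)))
        + lam • (varWord k [x] ⊗ₜ[k] Pop k X (sing k RBWord.one))
        + sing k RBWord.one ⊗ₜ[k]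
            (D.d (D.d (Pop k X (sing k RBWord.one)) (varWord k [x]))
              (Pop k X (sing k RBWord.one)))) ∧
    (lam ≠ 0 →
      RBL.degW [RBL.br [], RBL.var x] = 2 ∧
      RBL.degW [RBL.br [], RBL.var x, RBL.br []] = 3 ∧
      ¬(∀ n : ℕ, ∀ f ∈ Hdeg k X n,
          D.Dl f ∈ ⨆ (p : ℕ) (q : ℕ) (_ : p + q = n), HdegT k X p q)) := by
  classical
  constructor
  · rw [show varWord k [x] = sing k (RBaux.Wx x) from rfl, RBaux.Pop_one, RBaux.Pop_b,
      RBaux.d_b_x, RBaux.d_bx_b, RBaux.d_x_b, RBaux.Dl_bxb]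
    simp only [TensorProduct.add_tmul, TensorProduct.tmul_add, TensorProduct.smul_tmul',
      TensorProduct.tmul_smul, two_smul]
    module
  · intro hlam
    refine ⟨by simp [RBL.degW, RBL.degL], by simp [RBL.degW, RBL.degL], ?_⟩
    intro hall
    set ψ : (RBMod k X ⊗[k] RBMod k X) →ₗ[k] k :=
      TensorProduct.lift ((LinearMap.mul k k).compl₁₂
        (Finsupp.lapply (RBaux.Wb (X := X))) (Finsupp.lapply (RBaux.Wx x))) with hψ
    have hψt : ∀ a b : RBMod k X,
        ψ (a ⊗ₜ[k] b) = a (RBaux.Wb (X := X)) * b (RBaux.Wx x) := by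
      intro a b
      simp [hψ, TensorProduct.lift.tmul]
    have hker : (⨆ (p : ℕ) (q : ℕ) (_ : p + q = 3), HdegT k X p q)
        ≤ LinearMap.ker ψ := by
      refine iSup_le fun p => iSup_le fun q => iSup_le fun hpq => ?_
      refine Submodule.map₂_le.2 fun a ha b hb => ?_
      have hgoal : ψ (a ⊗ₜ[k] b) = 0 := by
        rw [hψt]
        rcases eq_or_ne p 1 with hp | hp
        · have hq : q ≠ 1 := by omega
          have hb0 : b (RBaux.Wx x) = 0 := by
            by_contra hbz
            have hmem := (Finsupp.mem_supported k b).1 hb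
              (Finsupp.mem_support_iff.2 hbz)
            have : (RBaux.Wx x).deg = q := hmem
            simp [RBWord.deg, RBaux.Wx, RBL.degW, RBL.degL] at this
            exact hq this.symm
          rw [hb0, mul_zero]
        · have ha0 : a (RBaux.Wb (X := X)) = 0 := by
            by_contra haz
            have hmem := (Finsupp.mem_supported k a).1 ha
              (Finsupp.mem_support_iff.2 haz)
            have : (RBaux.Wb (X := X)).deg = p := hmem
            simp [RBWord.deg, RBaux.Wb, RBL.degW, RBL.degL] at this
            exact hp this.symm
          rw [ha0, zero_mul]
      exact hgoal
    have hf : sing k (RBaux.Wbxb x) ∈ Hdeg k X 3 :=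
      Finsupp.single_mem_supported k 1
        (by show RBL.degW [RBL.br [], RBL.var x, RBL.br []] = 3; simp [RBL.degW, RBL.degL])
    have h0 : ψ (D.Dl (sing k (RBaux.Wbxb x))) = 0 :=
      hker (hall 3 _ hf)
    rw [RBaux.Dl_bxb] at h0
    simp only [map_add, map_smul, hψt, TensorProduct.add_tmul, TensorProduct.tmul_add,
      TensorProduct.smul_tmul', TensorProduct.tmul_smul] at h0
    have veq : ∀ w : RBWord X, sing k w w = (1 : k) := fun w => Finsupp.single_eq_same
    have vne : ∀ w w' : RBWord X, w ≠ w' → sing k w w' = (0 : k) :=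
      fun _ _ h => Finsupp.single_eq_of_ne' h
    simp only [
      vne (RBaux.Wbxb x) (RBaux.Wb (X := X))
        (fun h => by simpa [RBaux.Wbxb, RBaux.Wb] using congrArg Subtype.val h),
      vne (RBaux.Wbx x) (RBaux.Wb (X := X))
        (fun h => by simpa [RBaux.Wbx, RBaux.Wb] using congrArg Subtype.val h),
      vne (RBaux.Wbb (X := X)) (RBaux.Wb (X := X))
        (fun h => by simpa [RBaux.Wbb, RBaux.Wb] using congrArg Subtype.val h),
      vne (RBaux.Wxb x) (RBaux.Wb (X := X))
        (fun h => by simpa [RBaux.Wxb, RBaux.Wb] using congrArg Subtype.val h),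
      vne (RBaux.Wx x) (RBaux.Wb (X := X))
        (fun h => by simpa [RBaux.Wx, RBaux.Wb] using congrArg Subtype.val h),
      vne RBWord.one (RBaux.Wb (X := X))
        (fun h => by simpa [RBWord.one, RBaux.Wb] using congrArg Subtype.val h),
      vne (RBaux.Wbxb x) (RBaux.Wx x)
        (fun h => by simpa [RBaux.Wbxb, RBaux.Wx] using congrArg Subtype.val h),
      vne (RBaux.Wbx x) (RBaux.Wx x)
        (fun h => by simpa [RBaux.Wbx, RBaux.Wx] using congrArg Subtype.val h),
      vne (RBaux.Wbb (X := X)) (RBaux.Wx x)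
        (fun h => by simpa [RBaux.Wbb, RBaux.Wx] using congrArg Subtype.val h),
      vne (RBaux.Wxb x) (RBaux.Wx x)
        (fun h => by simpa [RBaux.Wxb, RBaux.Wx] using congrArg Subtype.val h),
      vne (RBaux.Wb (X := X)) (RBaux.Wx x)
        (fun h => by simpa [RBaux.Wb, RBaux.Wx] using congrArg Subtype.val h),
      vne RBWord.one (RBaux.Wx x)
        (fun h => by simpa [RBWord.one, RBaux.Wx] using congrArg Subtype.val h),
      veq, Finsupp.smul_apply, smul_eq_mul, mul_zero, zero_mul, mul_one, one_mul,
      add_zero, zero_add] at h0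
    exact hlam h0
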